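/- arXiv:2101.12711 — 3 statements merged into one kernel-verified Lean document; each statement's English description precedes it below -/
import Mathlib

section
/- Let (X,d) be a proper metric space and let μ be a Borel measure on X which is finite on bounded sets and satisfies μ({x : d(x,p) = r}) = 0 for every p ∈ X and every r > 0. Let (E_i)_{i∈ℕ} be a sequence of bounded Borel subsets of X with lim_i μ(E_i) = W ∈ (0,∞). Then, after passing to a subsequence, exactly one of the following three alternatives occurs. (1) (Vanishing) For every R > 0 one has lim_i sup_{p∈X} μ(E_i ∩ B_R(p)) = 0. (2) (Compactness) There exists a sequence of points p_i ∈ X such that for every ε ∈ (0, W/2) there exist R ≥ 1 and i_ε ∈ ℕ with μ(E_i ∩ B_R(p_i)) ≥ W − ε for all i ≥ i_ε; moreover there exist I ∈ ℕ and r ≥ 1 such that μ(E_i ∩ B_r(p_i)) ≥ μ(E_i ∩ B_r(q)) for every q ∈ X and every i, and μ(E_i ∩ B_r(p_i)) > W/2 for all i ≥ I. (3) (Dichotomy) There exists w ∈ (0, W) such that for every ε ∈ (0, w/2) there exist R ≥ 1, i_ε ∈ ℕ, a sequence of points p_i ∈ X and radii R_i → +∞ such that, for every i ≥ i_ε: |μ(E_i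 ∩ B_R(p_i)) − w| < ε, |μ(E_i ∖ B_{R_i}(p_i)) − (W − w)| < ε, and μ(E_i ∩ B_R(p_i)) ≥ μ(E_i ∩ B_R(q)) for every q ∈ X. -/
open MeasureTheory Metric Filter Bornology
open scoped ENNReal NNReal
set_option linter.unusedSectionVars false

section Defs

variable {X : Type*} [MetricSpace X] [MeasurableSpace X]

/-- Vanishing alternative of the concentration-compactness lemma. -/
def CCVanishing (μ : Measure X) (E : ℕ → Set X) : Prop :=
  ∀ R : ℝ, 0 < R →
    Tendsto (fun i => ⨆ p : X, (μ (E i ∩ ball p R)).toReal) atTop (nhds 0)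

/-- Compactness alternative of the concentration-compactness lemma. -/
def CCCompactness (μ : Measure X) (E : ℕ → Set X) (W : ℝ) : Prop :=
  ∃ p : ℕ → X,
    (∀ ε : ℝ, 0 < ε → ε < W / 2 →
      ∃ R : ℝ, 1 ≤ R ∧ ∃ iε : ℕ, ∀ i, iε ≤ i →
        W - ε ≤ (μ (E i ∩ ball (p i) R)).toReal) ∧
    ∃ I : ℕ, ∃ r : ℝ, 1 ≤ r ∧
      (∀ i : ℕ, ∀ q : X, μ (E i ∩ ball q r) ≤ μ (E i ∩ ball (p i) r)) ∧
      ∀ i, I ≤ i → W / 2 < (μ (E i ∩ ball (p i) r)).toReal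

/-- Dichotomy alternative of the concentration-compactness lemma. -/
def CCDichotomy (μ : Measure X) (E : ℕ → Set X) (W : ℝ) : Prop :=
  ∃ w : ℝ, 0 < w ∧ w < W ∧
    ∀ ε : ℝ, 0 < ε → ε < w / 2 →
      ∃ R : ℝ, 1 ≤ R ∧ ∃ iε : ℕ, ∃ p : ℕ → X, ∃ Ri : ℕ → ℝ,
        Tendsto Ri atTop atTop ∧
        ∀ i, iε ≤ i →
          |(μ (E i ∩ ball (p i) R)).toReal - w| < ε ∧
          |(μ (E i \ ball (p i) (Ri i))).toReal - (W - w)| < ε ∧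
          ∀ q : X, μ (E i ∩ ball q R) ≤ μ (E i ∩ ball (p i) R)

end Defs

section Helpers
variable {X : Type*} [MetricSpace X] [ProperSpace X] [MeasurableSpace X] [BorelSpace X]
  (μ : Measure X)

lemma toReal_meas_mono {A B : Set X} (h : A ⊆ B) (hB : μ B ≠ ⊤) :
    (μ A).toReal ≤ (μ B).toReal :=
  ENNReal.toReal_mono hB (measure_mono h)

lemma diff_toReal {E B : Set X} (hE : μ E ≠ ⊤) (hB : MeasurableSet B) :
    (μ (E \ B)).toReal = (μ E).toReal - (μ (E ∩ B)).toReal := by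
  have h := measure_inter_add_diff (μ := μ) E hB
  have h1 : μ (E ∩ B) ≠ ⊤ := ne_top_of_le_ne_top hE (measure_mono Set.inter_subset_left)
  have h2 : μ (E \ B) ≠ ⊤ := ne_top_of_le_ne_top hE (measure_mono Set.diff_subset)
  have := congrArg ENNReal.toReal h
  rw [ENNReal.toReal_add h1 h2] at this
  linarith

/-- Continuity of the mass in a ball as a function of the center. -/
lemma cont_ball_mass {E : Set X} (hEm : MeasurableSet E) (hE : μ E ≠ ⊤)
    (hsph : ∀ (p : X) (r : ℝ), 0 < r → μ (sphere p r) = 0)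
    {R : ℝ} (hR : 0 < R) :
    Continuous fun p : X => (μ (E ∩ ball p R)).toReal := by
  rw [Metric.continuous_iff]
  intro p ε hε
  set S : ℕ → Set X := fun n => E ∩ (closedBall p (R + 1/(n+1)) \ ball p (R - 1/(n+1))) with hS
  have hanti : Antitone S := by
    intro m n hmn
    apply Set.inter_subset_inter_right
    have h1 : (1:ℝ)/(n+1) ≤ 1/(m+1) := by
      apply one_div_le_one_div_of_le (by positivity)
      exact_mod_cast by omega
    exact Set.diff_subset_diff (closedBall_subset_closedBall (by linarith))
      (ball_subset_ball (by linarith))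
  have hinter : ⋂ n, S n = E ∩ sphere p R := by
    ext x
    simp only [Set.mem_iInter, hS, Set.mem_inter_iff, Set.mem_diff, mem_closedBall,
      mem_ball, mem_sphere, not_lt]
    constructor
    · intro h
      refine ⟨(h 0).1, le_antisymm ?_ ?_⟩
      · by_contra hc
        push_neg at hc
        obtain ⟨n, hn⟩ := exists_nat_one_div_lt (sub_pos.2 hc)
        have := (h n).2.1
        linarith
      · by_contra hc
        push_neg at hc
        obtain ⟨n, hn⟩ := exists_nat_one_div_lt (sub_pos.2 hc)
        have := (h n).2.2
        linarith
    · intro ⟨h1, h2⟩ n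
      have : (0:ℝ) < 1/(n+1) := by positivity
      exact ⟨h1, by linarith, by linarith⟩
  have htend : Tendsto (fun n => μ (S n)) atTop (nhds 0) := by
    have h0 : μ (⋂ n, S n) = 0 := by
      rw [hinter]
      exact le_antisymm (le_trans (measure_mono Set.inter_subset_right)
        (hsph p R hR).le) zero_le
    have := MeasureTheory.tendsto_measure_iInter_atTop (μ := μ) (s := S)
      (fun n => (hEm.inter ((measurableSet_closedBall).diff measurableSet_ball)).nullMeasurableSet)
      hanti ⟨0, ne_top_of_le_ne_top hE (measure_mono Set.inter_subset_left)⟩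
    rw [h0] at this
    exact this
  obtain ⟨n, hn⟩ := (htend.eventually_lt_const
    (by simp [ENNReal.ofReal_pos, hε] : (0:ℝ≥0∞) < ENNReal.ofReal ε)).exists
  have hδ : (0:ℝ) < 1/(n+1) := by positivity
  refine ⟨1/(n+1), hδ, fun q hq => ?_⟩
  have hfin : ∀ A : Set X, μ (E ∩ A) ≠ ⊤ :=
    fun A => ne_top_of_le_ne_top hE (measure_mono Set.inter_subset_left)
  have hSfin : μ (S n) ≠ ⊤ := hfin _
  have hSn : (μ (S n)).toReal < ε := by
    rw [← ENNReal.ofReal_toReal hSfin] at hn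
    exact (ENNReal.ofReal_lt_ofReal_iff hε).1 hn
  rw [dist_comm] at hq
  -- hq : dist p q... we keep dist q p < δ
  have hqp : dist q p < 1/(n+1) := by rwa [dist_comm] at hq
  have hsub1 : E ∩ ball q R ⊆ (E ∩ ball p R) ∪ S n := by
    rintro x ⟨hxE, hxq⟩
    rw [mem_ball] at hxq
    by_cases hxp : x ∈ ball p R
    · exact Or.inl ⟨hxE, hxp⟩
    · rw [mem_ball, not_lt] at hxp
      refine Or.inr ⟨hxE, mem_closedBall.2 ?_, fun hc => ?_⟩
      · calc dist x p ≤ dist x q + dist q p := dist_triangle _ _ _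
          _ ≤ R + 1/(n+1) := by linarith
      · rw [mem_ball] at hc; linarith
  have hsub2 : E ∩ ball p R ⊆ (E ∩ ball q R) ∪ S n := by
    rintro x ⟨hxE, hxp⟩
    rw [mem_ball] at hxp
    by_cases hxq : x ∈ ball q R
    · exact Or.inl ⟨hxE, hxq⟩
    · rw [mem_ball, not_lt] at hxq
      refine Or.inr ⟨hxE, mem_closedBall.2 (by linarith), fun hc => ?_⟩
      rw [mem_ball] at hc
      have : dist x q ≤ dist x p + dist p q := dist_triangle _ _ _
      rw [dist_comm p q] at this
      linarith
  have hb1 : (μ (E ∩ ball q R)).toReal ≤ (μ (E ∩ ball p R)).toReal + (μ (S n)).toReal := by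
    have h := (measure_mono hsub1).trans (measure_union_le (μ := μ) _ _)
    have := ENNReal.toReal_mono (by
      exact ENNReal.add_ne_top.2 ⟨hfin _, hSfin⟩) h
    rwa [ENNReal.toReal_add (hfin _) hSfin] at this
  have hb2 : (μ (E ∩ ball p R)).toReal ≤ (μ (E ∩ ball q R)).toReal + (μ (S n)).toReal := by
    have h := (measure_mono hsub2).trans (measure_union_le (μ := μ) _ _)
    have := ENNReal.toReal_mono (ENNReal.add_ne_top.2 ⟨hfin _, hSfin⟩) h
    rwa [ENNReal.toReal_add (hfin _) hSfin] at this
  rw [Real.dist_eq, abs_sub_lt_iff]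
  constructor <;> linarith

/-- Existence of a maximizing center. -/
lemma exists_max_center [Nonempty X] {E : Set X} (hEm : MeasurableSet E)
    (hEb : IsBounded E) (hE : μ E ≠ ⊤)
    (hsph : ∀ (p : X) (r : ℝ), 0 < r → μ (sphere p r) = 0)
    {R : ℝ} (hR : 0 < R) :
    ∃ p : X, ∀ q : X, μ (E ∩ ball q R) ≤ μ (E ∩ ball p R) := by
  rcases Set.eq_empty_or_nonempty E with hemp | ⟨x₀, hx₀⟩
  · exact ⟨Classical.arbitrary X, fun q => by simp [hemp]⟩
  obtain ⟨D, hD⟩ := hEb.subset_closedBall x₀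
  have hD0 : 0 ≤ D := by
    have := hD hx₀
    rw [mem_closedBall] at this
    linarith [dist_nonneg (x := x₀) (y := x₀), this]
  set K := closedBall x₀ (D + R) with hK
  have hKc : IsCompact K := isCompact_closedBall _ _
  have hKne : K.Nonempty := ⟨x₀, by simp [hK, mem_closedBall]; positivity⟩
  obtain ⟨p, hpK, hmax⟩ := hKc.exists_isMaxOn hKne
    ((cont_ball_mass μ hEm hE hsph hR).continuousOn)
  refine ⟨p, fun q => ?_⟩
  by_cases hqK : q ∈ K
  · have := hmax hqK
    simp only [Set.mem_setOf_eq] at this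
    exact (ENNReal.toReal_le_toReal (ne_top_of_le_ne_top hE
      (measure_mono Set.inter_subset_left)) (ne_top_of_le_ne_top hE
      (measure_mono Set.inter_subset_left))).1 this
  · have : E ∩ ball q R = ∅ := by
      ext x
      simp only [Set.mem_inter_iff, mem_ball, Set.mem_empty_iff_false, iff_false, not_and, not_lt]
      intro hxE
      have h1 : dist x x₀ ≤ D := mem_closedBall.1 (hD hxE)
      rw [hK, mem_closedBall, not_le] at hqK
      have := dist_triangle q x x₀
      rw [dist_comm q x] at this
      linarith
    simp [this]

lemma bddAbove_ball_mass {E' : Set X} (hfin' : μ E' ≠ ⊤) {R : ℝ} :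
    BddAbove (Set.range fun p : X => (μ (E' ∩ ball p R)).toReal) := by
  refine ⟨(μ E').toReal, ?_⟩
  rintro _ ⟨q, rfl⟩
  exact toReal_meas_mono μ Set.inter_subset_left hfin'

lemma comp_not_van {E' : ℕ → Set X} (hfin' : ∀ i, μ (E' i) ≠ ⊤) {W : ℝ} (hW : 0 < W)
    (hC : CCCompactness μ E' W) : ¬ CCVanishing μ E' := by
  intro hV
  obtain ⟨p, -, I, r, hr1, -, hgt⟩ := hC
  have h := hV r (lt_of_lt_of_le one_pos hr1)
  have h2 : W / 2 ≤ 0 := ge_of_tendsto h (eventually_atTop.2 ⟨I, fun i hi =>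
    le_trans (hgt i hi).le (le_ciSup (bddAbove_ball_mass μ (hfin' i)) (p i))⟩)
  linarith

lemma dich_not_van {E' : ℕ → Set X} (hfin' : ∀ i, μ (E' i) ≠ ⊤) {W : ℝ}
    (hD : CCDichotomy μ E' W) : ¬ CCVanishing μ E' := by
  intro hV
  obtain ⟨w, hw0, hwW, h⟩ := hD
  obtain ⟨R, hR1, iε, p, Ri, -, hspec⟩ := h (w/4) (by positivity) (by linarith)
  have hV' := hV R (lt_of_lt_of_le one_pos hR1)
  have h2 : w / 2 ≤ 0 := by
    refine ge_of_tendsto hV' (eventually_atTop.2 ⟨iε, fun i hi => ?_⟩)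
    have hb := (abs_lt.1 (hspec i hi).1).1
    refine le_trans (by linarith) (le_trans (le_refl _ : (μ (E' i ∩ ball (p i) R)).toReal ≤ _)
      (le_ciSup (bddAbove_ball_mass μ (hfin' i)) (p i)))
  linarith

lemma comp_dich_false {E' : ℕ → Set X} (hfin' : ∀ i, μ (E' i) ≠ ⊤) {W : ℝ} (hW : 0 < W)
    (hlim' : Tendsto (fun i => (μ (E' i)).toReal) atTop (nhds W))
    (hC : CCCompactness μ E' W) (hD : CCDichotomy μ E' W) : False := by
  obtain ⟨w, hw0, hwW, hD'⟩ := hD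
  set ε := min w (W - w) / 4 with hεdef
  have hmw : min w (W - w) ≤ w := min_le_left _ _
  have hmW : min w (W - w) ≤ W - w := min_le_right _ _
  have hε0 : 0 < ε := by
    have := lt_min hw0 (by linarith : (0:ℝ) < W - w)
    positivity
  obtain ⟨R, hR1, iε, p, Ri, hRiT, hspec⟩ := hD' ε hε0 (by rw [hεdef]; linarith)
  obtain ⟨p', hC1, -⟩ := hC
  obtain ⟨R', hR'1, iε', hC1'⟩ := hC1 ε hε0 (by rw [hεdef]; linarith)
  have hev1 : ∀ᶠ i in atTop, (μ (E' i)).toReal < W + ε :=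
    hlim'.eventually_lt_const (by linarith)
  have hev2 : ∀ᶠ i in atTop, R + 2*R' < Ri i := hRiT.eventually_gt_atTop _
  obtain ⟨i, ⟨⟨ha, hRi⟩, hiε, hiε'⟩⟩ :=
    ((hev1.and hev2).and ((eventually_ge_atTop iε).and (eventually_ge_atTop iε'))).exists
  obtain ⟨hb, hd, -⟩ := hspec i hiε
  have hc := hC1' i hiε'
  have hfinE : ∀ A : Set X, μ (E' i ∩ A) ≠ ⊤ :=
    fun A => ne_top_of_le_ne_top (hfin' i) (measure_mono Set.inter_subset_left)
  have hfinD : ∀ A : Set X, μ (E' i \ A) ≠ ⊤ :=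
    fun A => ne_top_of_le_ne_top (hfin' i) (measure_mono Set.diff_subset)
  have hdiffR' : (μ (E' i \ ball (p' i) R')).toReal < 2*ε := by
    rw [diff_toReal μ (hfin' i) measurableSet_ball]
    linarith
  have hb' : w - ε < (μ (E' i ∩ ball (p i) R)).toReal := by
    have := (abs_lt.1 hb).1; linarith
  have hd' : W - w - ε < (μ (E' i \ ball (p i) (Ri i))).toReal := by
    have := (abs_lt.1 hd).1; linarith
  -- point x in both balls
  have hS1 : μ ((E' i ∩ ball (p i) R) ∩ ball (p' i) R') ≠ 0 := by
    intro h0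
    have hsub : E' i ∩ ball (p i) R ⊆
        ((E' i ∩ ball (p i) R) ∩ ball (p' i) R') ∪ (E' i \ ball (p' i) R') := by
      rintro x ⟨hxE, hxb⟩
      by_cases hx' : x ∈ ball (p' i) R'
      · exact Or.inl ⟨⟨hxE, hxb⟩, hx'⟩
      · exact Or.inr ⟨hxE, hx'⟩
    have hle := (measure_mono hsub).trans (measure_union_le (μ := μ) _ _)
    rw [h0, zero_add] at hle
    have := ENNReal.toReal_mono (hfinD _) hle
    linarith
  obtain ⟨x, ⟨⟨-, hxp⟩, hxp'⟩⟩ := nonempty_of_measure_ne_zero hS1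
  have hS2 : μ ((E' i \ ball (p i) (Ri i)) ∩ ball (p' i) R') ≠ 0 := by
    intro h0
    have hsub : E' i \ ball (p i) (Ri i) ⊆
        ((E' i \ ball (p i) (Ri i)) ∩ ball (p' i) R') ∪ (E' i \ ball (p' i) R') := by
      rintro x ⟨hxE, hxb⟩
      by_cases hx' : x ∈ ball (p' i) R'
      · exact Or.inl ⟨⟨hxE, hxb⟩, hx'⟩
      · exact Or.inr ⟨hxE, hx'⟩
    have hle := (measure_mono hsub).trans (measure_union_le (μ := μ) _ _)
    rw [h0, zero_add] at hle
    have := ENNReal.toReal_mono (hfinD _) hle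
    linarith
  obtain ⟨y, ⟨⟨-, hyp⟩, hyp'⟩⟩ := nonempty_of_measure_ne_zero hS2
  rw [mem_ball] at hxp hxp' hyp'
  rw [mem_ball, not_lt] at hyp
  have t1 : dist y (p i) ≤ dist y (p' i) + dist (p' i) x + dist x (p i) :=
    dist_triangle4 _ _ _ _
  have t2 : dist (p' i) x = dist x (p' i) := dist_comm _ _
  linarith

end Helpers

/-- Concentration-compactness: up to a subsequence, exactly one of vanishing,
compactness and dichotomy occurs. -/
theorem concentration_compactness
    {X : Type*} [MetricSpace X] [ProperSpace X] [MeasurableSpace X] [BorelSpace X]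
    (μ : Measure X)
    (hfin : ∀ s : Set X, IsBounded s → μ s ≠ ⊤)
    (hsph : ∀ (p : X) (r : ℝ), 0 < r → μ (sphere p r) = 0)
    (E : ℕ → Set X) (hmeas : ∀ i, MeasurableSet (E i))
    (hbd : ∀ i, IsBounded (E i))
    (W : ℝ) (hW : 0 < W)
    (hlim : Tendsto (fun i => (μ (E i)).toReal) atTop (nhds W)) :
    ∃ φ : ℕ → ℕ, StrictMono φ ∧
      ((CCVanishing μ (E ∘ φ) ∧ ¬ CCCompactness μ (E ∘ φ) W ∧ ¬ CCDichotomy μ (E ∘ φ) W) ∨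
       (CCCompactness μ (E ∘ φ) W ∧ ¬ CCVanishing μ (E ∘ φ) ∧ ¬ CCDichotomy μ (E ∘ φ) W) ∨
       (CCDichotomy μ (E ∘ φ) W ∧ ¬ CCVanishing μ (E ∘ φ) ∧ ¬ CCCompactness μ (E ∘ φ) W)) := by
  -- X is nonempty
  rcases isEmpty_or_nonempty X with hX | hX
  · exfalso
    have h0 : ∀ i, (μ (E i)).toReal = 0 := fun i => by
      rw [Set.eq_empty_of_isEmpty (E i)]; simp
    have : Tendsto (fun _ : ℕ => (0:ℝ)) atTop (nhds W) := by
      simpa [h0] using hlim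
    have := tendsto_nhds_unique this tendsto_const_nhds
    linarith
  -- basic finiteness
  have hfinE : ∀ i, μ (E i) ≠ ⊤ := fun i => hfin _ (hbd i)
  have hfinI : ∀ i (A : Set X), μ (E i ∩ A) ≠ ⊤ :=
    fun i A => ne_top_of_le_ne_top (hfinE i) (measure_mono Set.inter_subset_left)
  have hmax : ∀ i (R : ℝ), 0 < R → ∃ p : X, ∀ q : X,
      μ (E i ∩ ball q R) ≤ μ (E i ∩ ball p R) :=
    fun i R hR => exists_max_center μ (hmeas i) (hbd i) (hfinE i) hsph hR
  -- the concentration function at integer radii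
  set Q : ℕ → ℕ → ℝ := fun i n => ⨆ p : X, (μ (E i ∩ ball p (n:ℝ))).toReal with hQdef
  have hQBdd : ∀ i (R : ℝ), BddAbove (Set.range fun p : X => (μ (E i ∩ ball p R)).toReal) :=
    fun i R => bddAbove_ball_mass μ (hfinE i)
  have hQ0 : ∀ i n, 0 ≤ Q i n := fun i n => Real.iSup_nonneg fun p => ENNReal.toReal_nonneg
  have hQle : ∀ i n, Q i n ≤ (μ (E i)).toReal :=
    fun i n => ciSup_le fun p => toReal_meas_mono μ Set.inter_subset_left (hfinE i)
  have hQmono : ∀ i {m n : ℕ}, m ≤ n → Q i m ≤ Q i n := by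
    intro i m n hmn
    refine ciSup_le fun p => le_trans ?_ (le_ciSup (hQBdd i _) p)
    exact toReal_meas_mono μ (Set.inter_subset_inter_right _
      (ball_subset_ball (by exact_mod_cast hmn))) (hfinI i _)
  have hQeq : ∀ i (n : ℕ) (p : X),
      (∀ q : X, μ (E i ∩ ball q (n:ℝ)) ≤ μ (E i ∩ ball p (n:ℝ))) →
      Q i n = (μ (E i ∩ ball p (n:ℝ))).toReal := fun i n p hp =>
    le_antisymm (ciSup_le fun q => ENNReal.toReal_mono (hfinI i _) (hp q))
      (le_ciSup (hQBdd i _) p)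
  -- uniform bound
  obtain ⟨B, hB⟩ := hlim.bddAbove_range
  have hBb : ∀ i, (μ (E i)).toReal ≤ B := fun i => hB ⟨i, rfl⟩
  -- extract a subsequence converging pointwise on integer radii
  have hcomp : IsCompact (Set.univ.pi fun _ : ℕ => Set.Icc (0:ℝ) B) :=
    isCompact_univ_pi fun _ => isCompact_Icc
  obtain ⟨L, hLmem, φ, hφ, hLtend⟩ := hcomp.tendsto_subseq
    (x := fun i => (fun n => Q i n))
    (fun i => Set.mem_univ_pi.2 fun n => ⟨hQ0 i n, le_trans (hQle i n) (hBb i)⟩)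
  have hLn : ∀ n, Tendsto (fun i => Q (φ i) n) atTop (nhds (L n)) :=
    fun n => tendsto_pi_nhds.1 hLtend n
  have hlimφ : Tendsto (fun i => (μ (E (φ i))).toReal) atTop (nhds W) :=
    hlim.comp hφ.tendsto_atTop
  have hfinφ : ∀ i, μ ((E ∘ φ) i) ≠ ⊤ := fun i => hfinE (φ i)
  have hL0 : ∀ n, 0 ≤ L n := fun n => ge_of_tendsto' (hLn n) (fun i => hQ0 (φ i) n)
  have hLW : ∀ n, L n ≤ W := fun n =>
    le_of_tendsto_of_tendsto' (hLn n) hlimφ (fun i => hQle (φ i) n)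
  have hLmono : Monotone L := fun m n hmn =>
    le_of_tendsto_of_tendsto' (hLn m) (hLn n) (fun i => hQmono (φ i) hmn)
  have hLBdd : BddAbove (Set.range L) := ⟨W, by rintro _ ⟨n, rfl⟩; exact hLW n⟩
  set w : ℝ := ⨆ n, L n with hwdef
  have hwW : w ≤ W := ciSup_le hLW
  have hw0 : 0 ≤ w := le_trans (hL0 0) (le_ciSup hLBdd 0)
  have hLlew : ∀ n, L n ≤ w := fun n => le_ciSup hLBdd n
  refine ⟨φ, hφ, ?_⟩
  rcases eq_or_lt_of_le hw0 with hw | hw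
  · -- VANISHING
    left
    have hVan : CCVanishing μ (E ∘ φ) := by
      intro R hR
      obtain ⟨n, hn⟩ := exists_nat_ge R
      have hLn0 : L n = 0 := le_antisymm (by rw [hw]; exact hLlew n) (hL0 n)
      refine squeeze_zero (fun i => Real.iSup_nonneg fun p => ENNReal.toReal_nonneg)
        (fun i => ?_) (by rw [← hLn0]; exact hLn n)
      refine ciSup_le fun p => le_trans ?_ (le_ciSup (hQBdd (φ i) _) p)
      exact toReal_meas_mono μ (Set.inter_subset_inter_right _ (ball_subset_ball hn))
        (hfinI (φ i) _)
    exact ⟨hVan, fun hC => comp_not_van μ hfinφ hW hC hVan,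
      fun hD => dich_not_van μ hfinφ hD hVan⟩
  rcases eq_or_lt_of_le hwW with hwW' | hwW'
  · -- COMPACTNESS (w = W)
    right; left
    have hComp : CCCompactness μ (E ∘ φ) W := by
      obtain ⟨n₀, hn₀⟩ := exists_lt_of_lt_ciSup
        (show W/2 < w by rw [hwW']; linarith)
      set m : ℕ := max n₀ 1 with hmdef
      have hm1 : 1 ≤ m := le_max_right _ _
      have hmpos : (0:ℝ) < m := by exact_mod_cast hm1
      have hLm : W/2 < L m := lt_of_lt_of_le hn₀ (hLmono (le_max_left _ _))
      set p : ℕ → X := fun i => (hmax (φ i) m hmpos).choose with hpdef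
      have hp : ∀ i (q : X), μ (E (φ i) ∩ ball q (m:ℝ)) ≤ μ (E (φ i) ∩ ball (p i) (m:ℝ)) :=
        fun i => (hmax (φ i) m hmpos).choose_spec
      have hQp : ∀ i, Q (φ i) m = (μ (E (φ i) ∩ ball (p i) (m:ℝ))).toReal :=
        fun i => hQeq (φ i) m (p i) (hp i)
      refine ⟨p, ?_, ?_⟩
      · -- first clause
        intro ε hε0 hεW2
        obtain ⟨n₁, hn₁⟩ := exists_lt_of_lt_ciSup
          (show W - ε/2 < w by rw [hwW']; linarith)
        set m' : ℕ := max n₁ 1 with hm'def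
        have hm'pos : (0:ℝ) < m' := by
          have : 1 ≤ m' := le_max_right _ _
          exact_mod_cast this
        have hLm' : W - ε/2 < L m' := lt_of_lt_of_le hn₁ (hLmono (le_max_left _ _))
        set q : ℕ → X := fun i => (hmax (φ i) m' hm'pos).choose with hqdef
        have hq : ∀ i (q' : X), μ (E (φ i) ∩ ball q' (m':ℝ)) ≤ μ (E (φ i) ∩ ball (q i) (m':ℝ)) :=
          fun i => (hmax (φ i) m' hm'pos).choose_spec
        have hQq : ∀ i, Q (φ i) m' = (μ (E (φ i) ∩ ball (q i) (m':ℝ))).toReal :=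
          fun i => hQeq (φ i) m' (q i) (hq i)
        have hev1 : ∀ᶠ i in atTop, W - ε < Q (φ i) m' :=
          (hLn m').eventually_const_lt (by linarith)
        have hev2 : ∀ᶠ i in atTop, W/2 < Q (φ i) m :=
          (hLn m).eventually_const_lt hLm
        have hev3 : ∀ᶠ i in atTop, (μ (E (φ i))).toReal < W/2 + (W - ε) :=
          hlimφ.eventually_lt_const (by linarith)
        obtain ⟨iε, hiε⟩ := eventually_atTop.1 ((hev1.and hev2).and hev3)
        have hm'ge : (1:ℝ) ≤ (m':ℝ) := by exact_mod_cast (le_max_right n₁ 1)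
        have hmge : (1:ℝ) ≤ (m:ℝ) := by exact_mod_cast hm1
        refine ⟨2*(m':ℝ) + m, by linarith, iε, fun i hi => ?_⟩
        simp only [Function.comp_apply]
        obtain ⟨⟨h1, h2⟩, h3⟩ := hiε i hi
        rw [hQq i] at h1
        rw [hQp i] at h2
        -- the two balls intersect inside E (φ i)
        have hT : μ ((E (φ i) ∩ ball (p i) (m:ℝ)) ∩ (E (φ i) ∩ ball (q i) (m':ℝ))) ≠ 0 := by
          intro h0
          have hsum := measure_union_add_inter (μ := μ)
            (t := E (φ i) ∩ ball (q i) (m':ℝ)) (E (φ i) ∩ ball (p i) (m:ℝ))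
            ((hmeas (φ i)).inter measurableSet_ball)
          rw [h0, add_zero] at hsum
          have hle : μ (E (φ i) ∩ ball (p i) (m:ℝ)) + μ (E (φ i) ∩ ball (q i) (m':ℝ))
              ≤ μ (E (φ i)) := by
            rw [← hsum]
            exact measure_mono (Set.union_subset Set.inter_subset_left Set.inter_subset_left)
          have := ENNReal.toReal_mono (hfinE (φ i)) hle
          rw [ENNReal.toReal_add (hfinI _ _) (hfinI _ _)] at this
          linarith
        obtain ⟨x, ⟨⟨-, hxp⟩, ⟨-, hxq⟩⟩⟩ := nonempty_of_measure_ne_zero hT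
        rw [mem_ball] at hxp hxq
        have hball : ball (q i) (m':ℝ) ⊆ ball (p i) (2*(m':ℝ) + m) := by
          intro y hy
          rw [mem_ball] at hy ⊢
          have t1 : dist y (p i) ≤ dist y (q i) + dist (q i) x + dist x (p i) :=
            dist_triangle4 _ _ _ _
          have t2 : dist (q i) x = dist x (q i) := dist_comm _ _
          linarith
        refine le_trans h1.le (toReal_meas_mono μ (Set.inter_subset_inter_right _ hball)
          (hfinI (φ i) _))
      · -- second clause
        have hev : ∀ᶠ i in atTop, W/2 < Q (φ i) m := (hLn m).eventually_const_lt hLm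
        obtain ⟨I, hI⟩ := eventually_atTop.1 hev
        refine ⟨I, (m:ℝ), by exact_mod_cast hm1, fun i q' => hp i q', fun i hi => ?_⟩
        have := hI i hi
        rwa [hQp i] at this
    exact ⟨hComp, comp_not_van μ hfinφ hW hComp,
      fun hD => comp_dich_false μ hfinφ hW hlimφ hComp hD⟩
  · -- DICHOTOMY (0 < w < W)
    right; right
    have hDich : CCDichotomy μ (E ∘ φ) W := by
      refine ⟨w, hw, hwW', fun ε hε0 hεw2 => ?_⟩
      obtain ⟨n₀, hn₀⟩ := exists_lt_of_lt_ciSup (show w - ε/4 < w by linarith)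
      set m₀ : ℕ := max n₀ 1 with hm₀def
      have hm₀1 : 1 ≤ m₀ := le_max_right _ _
      have hm₀pos : (0:ℝ) < m₀ := by exact_mod_cast hm₀1
      have hLm₀ : w - ε/4 < L m₀ := lt_of_lt_of_le hn₀ (hLmono (le_max_left _ _))
      set p : ℕ → X := fun i => (hmax (φ i) m₀ hm₀pos).choose with hpdef
      have hp : ∀ i (q : X), μ (E (φ i) ∩ ball q (m₀:ℝ)) ≤ μ (E (φ i) ∩ ball (p i) (m₀:ℝ)) :=
        fun i => (hmax (φ i) m₀ hm₀pos).choose_spec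
      have hQp : ∀ i, Q (φ i) m₀ = (μ (E (φ i) ∩ ball (p i) (m₀:ℝ))).toReal :=
        fun i => hQeq (φ i) m₀ (p i) (hp i)
      -- the per-radius upper bounds
      set P : ℕ → ℕ → Prop :=
        fun k i => (μ (E (φ i) ∩ ball (p i) ((m₀ + k : ℕ):ℝ))).toReal < w + ε/4 with hPdef
      have hP : ∀ k, ∀ᶠ i in atTop, P k i := by
        intro k
        have hev := (hLn (m₀ + k)).eventually_lt_const
          (show L (m₀ + k) < w + ε/4 by have := hLlew (m₀ + k); linarith)
        filter_upwards [hev] with i hi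
        exact lt_of_le_of_lt (le_ciSup (hQBdd (φ i) _) (p i)) hi
      have hP' : ∀ k, ∀ᶠ i in atTop, ∀ j ≤ k, P j i := by
        intro k
        induction k with
        | zero => filter_upwards [hP 0] with i hi j hj; rwa [Nat.le_zero.1 hj]
        | succ k ih =>
          filter_upwards [ih, hP (k+1)] with i h1 h2 j hj
          rcases eq_or_lt_of_le hj with h | h
          · rwa [h]
          · exact h1 j (Nat.lt_succ_iff.1 h)
      set g : ℕ → ℕ := fun k => (eventually_atTop.1 (hP' k)).choose with hgdef
      have hg : ∀ k i, g k ≤ i → ∀ j ≤ k, P j i :=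
        fun k => (eventually_atTop.1 (hP' k)).choose_spec
      set N : ℕ → ℕ := fun k => k + (Finset.range (k+1)).sup g with hNdef
      have hNk : ∀ k, k ≤ N k := fun k => Nat.le_add_right _ _
      have hNg : ∀ k, g k ≤ N k := fun k => by
        show g k ≤ k + (Finset.range (k+1)).sup g
        exact le_add_left (Finset.le_sup (f := g) (Finset.mem_range.2 (Nat.lt_succ_self k)))
      have hNmono : Monotone N := fun a b hab => add_le_add hab
        (Finset.sup_mono (Finset.range_subset_range.2 (by omega)))
      set K : ℕ → ℕ := fun i => Nat.findGreatest (fun k => N k ≤ i) i with hKdef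
      have hK1 : ∀ i, N 0 ≤ i → N (K i) ≤ i := fun i hi => by
        show N (Nat.findGreatest (fun k => N k ≤ i) i) ≤ i
        exact Nat.findGreatest_spec (P := fun k => N k ≤ i) (Nat.zero_le i) hi
      have hK2 : ∀ k i, N k ≤ i → k ≤ K i := fun k i h => by
        show k ≤ Nat.findGreatest (fun k => N k ≤ i) i
        exact Nat.le_findGreatest (P := fun k => N k ≤ i) (le_trans (hNk k) h) h
      have hKT : Tendsto K atTop atTop :=
        tendsto_atTop_atTop.2 fun k => ⟨N k, fun i hi => hK2 k i hi⟩
      set Ri : ℕ → ℝ := fun i => (m₀:ℝ) + K i with hRidef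
      have hRiT : Tendsto Ri atTop atTop :=
        tendsto_atTop_add_const_left _ _ (tendsto_natCast_atTop_atTop.comp hKT)
      -- eventual bounds
      have hev1 : ∀ᶠ i in atTop, w - ε/2 < Q (φ i) m₀ :=
        (hLn m₀).eventually_const_lt (by linarith)
      have hev2 : ∀ᶠ i in atTop, Q (φ i) m₀ < w + ε/4 :=
        (hLn m₀).eventually_lt_const (by have := hLlew m₀; linarith)
      have hev3 : ∀ᶠ i in atTop, (μ (E (φ i))).toReal < W + ε/4 :=
        hlimφ.eventually_lt_const (by linarith)
      have hev4 : ∀ᶠ i in atTop, W - ε/4 < (μ (E (φ i))).toReal :=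
        hlimφ.eventually_const_lt (by linarith)
      have hev5 : ∀ᶠ i in atTop, N 0 ≤ i := eventually_ge_atTop _
      obtain ⟨iε, hiε⟩ := eventually_atTop.1 ((((hev1.and hev2).and hev3).and hev4).and hev5)
      refine ⟨(m₀:ℝ), by exact_mod_cast hm₀1, iε, p, Ri, hRiT, fun i hi => ?_⟩
      obtain ⟨⟨⟨⟨h1, h2⟩, h3⟩, h4⟩, h5⟩ := hiε i hi
      rw [hQp i] at h1 h2
      have hRieq : ball (p i) (Ri i) = ball (p i) ((m₀ + K i : ℕ):ℝ) := by
        rw [hRidef]; push_cast; ring_nf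
      have hc : (μ (E (φ i) ∩ ball (p i) (Ri i))).toReal < w + ε/4 := by
        rw [hRieq]
        exact hg (K i) i (le_trans (hNg (K i)) (hK1 i h5)) (K i) le_rfl
      have hcb : (μ (E (φ i) ∩ ball (p i) (m₀:ℝ))).toReal ≤
          (μ (E (φ i) ∩ ball (p i) (Ri i))).toReal := by
        refine toReal_meas_mono μ (Set.inter_subset_inter_right _ (ball_subset_ball ?_))
          (hfinI (φ i) _)
        rw [hRidef]
        simp only [le_add_iff_nonneg_right]
        positivity
      have hdiff : (μ (E (φ i) \ ball (p i) (Ri i))).toReal =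
          (μ (E (φ i))).toReal - (μ (E (φ i) ∩ ball (p i) (Ri i))).toReal :=
        diff_toReal μ (hfinE (φ i)) measurableSet_ball
      simp only [Function.comp_apply]
      refine ⟨?_, ?_, fun q => hp i q⟩
      · rw [abs_sub_lt_iff]; constructor <;> linarith
      · rw [hdiff, abs_sub_lt_iff]; constructor <;> linarith
    exact ⟨hDich, dich_not_van μ hfinφ hDich,
      fun hC => comp_dich_false μ hfinφ hW hlimφ hC hDich⟩
end

section
/- Let n ≥ 2 be an integer, k ≤ 0, v₀ > 0 and c > 0. Let (X,d) be a proper metric space and let μ be a Borel measure on X with 0 < μ(B_r(x)) < ∞ for every open ball, satisfying the Bishop–Gromov inequality with respect to v(n,k,·) and with μ(B₁(q)) ≥ v₀ for every q ∈ X. Assume the following relative isoperimetric inequality in unit balls: for every Borel set F ⊆ X and every p ∈ X with μ(F ∩ B₁(p)) < (1/2)·μ(B₁(p)), one has μ(F ∩ B₁(p))^{(n−1)/n} ≤ c·H^{n−1}(∂*F ∩ B₁(p)). Then, setting C := (v(n,k,1/2)/(c·v(n,k,6)))ⁿ, for every nonempty bounded Borel set E ⊆ X with μ(E) > 0 and 0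 < H^{n−1}(∂*E) < ∞ there exists p₀ ∈ X such that μ(E ∩ B₁(p₀)) ≥ min{ C·μ(E)ⁿ / H^{n−1}(∂*E)ⁿ , v₀/2 }. -/
open MeasureTheory Metric Filter Bornology
open scoped ENNReal

/-- `sn_k`: the generalized sine function of the simply connected model
of constant sectional curvature `k ≤ 0`. -/
noncomputable def snK (k r : ℝ) : ℝ :=
  if k = 0 then r else Real.sinh (Real.sqrt (-k) * r) / Real.sqrt (-k)

/-- `s(n,k,r)`: surface area of the sphere of radius `r` in the `n`-dimensional
simply connected model of constant curvature `k`. -/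
noncomputable def modelSurf (n : ℕ) (k r : ℝ) : ℝ :=
  n * (volume (ball (0 : EuclideanSpace ℝ (Fin n)) 1)).toReal * snK k r ^ (n - 1)

/-- `v(n,k,r)`: volume of the ball of radius `r` in the `n`-dimensional
simply connected model of constant curvature `k`. -/
noncomputable def modelVol (n : ℕ) (k r : ℝ) : ℝ :=
  ∫ t in (0:ℝ)..r, modelSurf n k t

/-- A measure on a metric space satisfies the Bishop–Gromov inequality with respect to
`v(n,k,·)` if the ratios `μ(B_r(x))/v(n,k,r)` are nonincreasing in `r`. -/
def BishopGromov {X : Type*} [MetricSpace X] [MeasurableSpace X]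
    (μ : Measure X) (n : ℕ) (k : ℝ) : Prop :=
  ∀ (x : X) (r R : ℝ), 0 < r → r ≤ R →
    (μ (ball x R)).toReal * modelVol n k r ≤ (μ (ball x r)).toReal * modelVol n k R

/-- The set of points of density `t` of a set `E` in a metric measure space. -/
def densitySet {X : Type*} [MetricSpace X] [MeasurableSpace X]
    (μ : Measure X) (E : Set X) (t : ℝ≥0∞) : Set X :=
  {x : X | Tendsto (fun r : ℝ => μ (E ∩ ball x r) / μ (ball x r))
    (nhdsWithin 0 (Set.Ioi 0)) (nhds t)}

/-- The essential boundary of a set `E` in a metric measure space: the complement of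
the union of the sets of points of density `0` and of density `1`. -/
def essBoundary {X : Type*} [MetricSpace X] [MeasurableSpace X]
    (μ : Measure X) (E : Set X) : Set X :=
  (densitySet μ E 0 ∪ densitySet μ E 1)ᶜ

lemma snK_pos {k : ℝ} (hk : k ≤ 0) {r : ℝ} (hr : 0 < r) : 0 < snK k r := by
  unfold snK
  split_ifs with h
  · exact hr
  · have hk' : 0 < -k := by
      rcases hk.lt_or_eq with h' | h'
      · linarith
      · exact absurd h' h
    have hs : 0 < Real.sqrt (-k) := Real.sqrt_pos.2 hk'
    exact div_pos (by positivity) hs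

lemma continuous_snK (k : ℝ) : Continuous (snK k) := by
  unfold snK
  split_ifs with h
  · exact continuous_id
  · fun_prop

lemma modelSurf_pos {n : ℕ} (hn : 1 ≤ n) {k : ℝ} (hk : k ≤ 0) {r : ℝ} (hr : 0 < r) :
    0 < modelSurf n k r := by
  unfold modelSurf
  have h1 : (0:ℝ) < n := by exact_mod_cast hn.trans_lt' (by norm_num)
  have h2 : 0 < (volume (ball (0 : EuclideanSpace ℝ (Fin n)) 1)).toReal :=
    ENNReal.toReal_pos (measure_ball_pos _ _ one_pos).ne' measure_ball_lt_top.ne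
  have := snK_pos hk hr
  positivity

lemma continuous_modelSurf (n : ℕ) (k : ℝ) : Continuous (modelSurf n k) :=
  continuous_const.mul ((continuous_snK k).pow _)

lemma modelVol_pos {n : ℕ} (hn : 1 ≤ n) {k : ℝ} (hk : k ≤ 0) {r : ℝ} (hr : 0 < r) :
    0 < modelVol n k r :=
  intervalIntegral.intervalIntegral_pos_of_pos_on
    ((continuous_modelSurf n k).intervalIntegrable 0 r)
    (fun _ hx => modelSurf_pos hn hk hx.1) hr

lemma exists_net {X : Type*} [MetricSpace X] [ProperSpace X] {E : Set X} (hEbd : IsBounded E) :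
    ∃ S : Finset X, ↑S ⊆ E ∧ ((S : Set X)).Pairwise (fun p q => 1 ≤ dist p q) ∧
      E ⊆ ⋃ p ∈ S, ball p 1 := by
  set 𝒮 : Set (Set X) := {s | s ⊆ E ∧ s.Pairwise (fun p q => 1 ≤ dist p q)} with h𝒮
  obtain ⟨m, hm⟩ : ∃ m, Maximal (· ∈ 𝒮) m := by
    apply zorn_subset
    intro c hc hchain
    refine ⟨⋃₀ c, ⟨?_, ?_⟩, fun s hs => Set.subset_sUnion_of_mem hs⟩
    · exact Set.sUnion_subset fun s hs => (hc hs).1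
    · intro p hp q hq hpq
      obtain ⟨s, hs, hps⟩ := hp
      obtain ⟨t, ht, hqt⟩ := hq
      rcases hchain.total hs ht with h | h
      · exact (hc ht).2 (h hps) hqt hpq
      · exact (hc hs).2 hps (h hqt) hpq
  have hmE : m ⊆ E := hm.1.1
  have hmsep : m.Pairwise (fun p q => 1 ≤ dist p q) := hm.1.2
  have hmfin : m.Finite := by
    have htb : TotallyBounded m :=
      (hEbd.isCompact_closure.totallyBounded).subset (hmE.trans subset_closure)
    obtain ⟨t, htfin, hcov⟩ := (totallyBounded_iff.1 htb) (1/2) (by norm_num)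
    have hsub : m ⊆ ⋃ y ∈ t, (m ∩ ball y (1/2)) := by
      intro x hx
      obtain ⟨y, hy, hxy⟩ := Set.mem_iUnion₂.1 (hcov hx)
      exact Set.mem_iUnion₂.2 ⟨y, hy, hx, hxy⟩
    refine Set.Finite.subset (Set.Finite.biUnion htfin fun y _ => ?_) hsub
    apply Set.Subsingleton.finite
    intro p hp q hq
    by_contra hpq
    have hge := hmsep hp.1 hq.1 hpq
    have hlt : dist p q < 1 := by
      calc dist p q ≤ dist p y + dist y q := dist_triangle _ _ _
        _ < 1/2 + 1/2 := by
            have h1 := hp.2; have h2 := hq.2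
            rw [mem_ball] at h1 h2
            rw [dist_comm y q]; linarith
        _ = 1 := by norm_num
    linarith
  refine ⟨hmfin.toFinset, ?_, ?_, ?_⟩
  · rw [Set.Finite.coe_toFinset]; exact hmE
  · rw [Set.Finite.coe_toFinset]; exact hmsep
  · intro x hx
    by_contra hcov
    simp only [Set.mem_iUnion, Set.Finite.mem_toFinset, not_exists, mem_ball] at hcov
    have hxm : x ∉ m := fun h => by
      have := hcov x h; simp at this
    have hins : insert x m ∈ 𝒮 := by
      constructor
      · exact Set.insert_subset hx hmE
      · intro p hp q hq hpq
        rcases hp with rfl | hp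
        · rcases hq with rfl | hq
          · exact absurd rfl hpq
          · exact not_lt.1 fun h => hcov q hq h
        · rcases hq with rfl | hq
          · rw [dist_comm]; exact not_lt.1 fun h => hcov p hp h
          · exact hmsep hp hq hpq
    have := hm.2 hins (Set.subset_insert x m)
    exact hxm (this (Set.mem_insert x m))

/-- Local mass lower bound: under Bishop–Gromov, noncollapsedness and a relative
isoperimetric inequality in unit balls, any bounded set of finite perimeter concentrates
a definite amount of its mass in some unit ball. -/
theorem local_mass_lower_bound
    {X : Type*} [MetricSpace X] [ProperSpace X] [MeasurableSpace X] [BorelSpace X]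
    (n : ℕ) (hn : 2 ≤ n) (k : ℝ) (hk : k ≤ 0)
    (v₀ c : ℝ) (hv₀ : 0 < v₀) (hc : 0 < c)
    (μ : Measure X)
    (hpos : ∀ (x : X) (r : ℝ), 0 < r → 0 < μ (ball x r))
    (hfin : ∀ (x : X) (r : ℝ), 0 < r → μ (ball x r) ≠ ⊤)
    (hBG : BishopGromov μ n k)
    (hv : ∀ q : X, ENNReal.ofReal v₀ ≤ μ (ball q 1))
    (hiso : ∀ (F : Set X) (p : X), MeasurableSet F →
      (μ (F ∩ ball p 1)).toReal < (1 / 2) * (μ (ball p 1)).toReal →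
      (μ (F ∩ ball p 1)).toReal ^ (((n : ℝ) - 1) / n) ≤
        c * (μH[(n : ℝ) - 1] (essBoundary μ F ∩ ball p 1)).toReal)
    (E : Set X) (hE : MeasurableSet E) (hEne : E.Nonempty) (hEbd : IsBounded E)
    (hEpos : 0 < μ E)
    (hPpos : 0 < μH[(n : ℝ) - 1] (essBoundary μ E))
    (hPfin : μH[(n : ℝ) - 1] (essBoundary μ E) ≠ ⊤) :
    ∃ p₀ : X,
      min ((modelVol n k (1 / 2) / (c * modelVol n k 6)) ^ n * (μ E).toReal ^ n /
            (μH[(n : ℝ) - 1] (essBoundary μ E)).toReal ^ n)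
          (v₀ / 2)
        ≤ (μ (E ∩ ball p₀ 1)).toReal := by
  classical
  by_contra hcon
  push_neg at hcon
  set P : ℝ := (μH[(n : ℝ) - 1] (essBoundary μ E)).toReal with hPdef
  set v2 : ℝ := modelVol n k (1/2) with hv2def
  set v6 : ℝ := modelVol n k 6 with hv6def
  have hn1 : 1 ≤ n := le_trans (by norm_num) hn
  have hn0 : (n:ℝ) ≠ 0 := by positivity
  have hP : 0 < P := ENNReal.toReal_pos hPpos.ne' hPfin
  have hv2pos : 0 < v2 := modelVol_pos hn1 hk (by norm_num)
  have hv6pos : 0 < v6 := modelVol_pos hn1 hk (by norm_num)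
  -- μ E is finite and positive
  obtain ⟨x₀, hx₀⟩ := hEne
  obtain ⟨R, hER⟩ := hEbd.subset_ball x₀
  have hμEfin : μ E ≠ ⊤ := by
    refine ne_top_of_le_ne_top (hfin x₀ (max R 1) (by positivity)) (measure_mono ?_)
    exact hER.trans (ball_subset_ball (le_max_left _ _))
  have hμE : 0 < (μ E).toReal := ENNReal.toReal_pos hEpos.ne' hμEfin
  set t : ℝ := min ((v2 / (c * v6)) ^ n * (μ E).toReal ^ n / P ^ n) (v₀ / 2) with htdef
  set y : ℝ := v2 / (c * v6) * (μ E).toReal / P with hydef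
  have hy : 0 < y := by positivity
  have hA : (v2 / (c * v6)) ^ n * (μ E).toReal ^ n / P ^ n = y ^ n := by
    rw [hydef]; ring
  have ht : 0 < t := by
    refine lt_min ?_ (by positivity)
    rw [hA]; positivity
  have htpow : t ^ ((1:ℝ)/n) ≤ y := by
    have h1 : t ≤ y ^ n := le_trans (min_le_left _ _) (le_of_eq hA)
    calc t ^ ((1:ℝ)/n) ≤ (y ^ n) ^ ((1:ℝ)/n) :=
          Real.rpow_le_rpow ht.le h1 (by positivity)
      _ = y := by
          rw [← Real.rpow_natCast y n, ← Real.rpow_mul hy.le,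
            mul_one_div_cancel hn0, Real.rpow_one]
  -- unit ball volumes
  have hballv : ∀ p : X, v₀ ≤ (μ (ball p 1)).toReal := fun p => by
    have := ENNReal.toReal_mono (hfin p 1 one_pos) (hv p)
    rwa [ENNReal.toReal_ofReal hv₀.le] at this
  -- isoperimetric inequality applies at every point
  have hiso' : ∀ p : X, (μ (E ∩ ball p 1)).toReal ^ (((n:ℝ) - 1)/n) ≤
      c * (μH[(n : ℝ) - 1] (essBoundary μ E ∩ ball p 1)).toReal := by
    intro p
    refine hiso E p hE ?_
    have h1 : (μ (E ∩ ball p 1)).toReal < t := hcon p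
    have h2 : t ≤ v₀ / 2 := min_le_right _ _
    have h3 := hballv p
    linarith
  have hexp : (1:ℝ)/n + ((n:ℝ) - 1)/n = 1 := by field_simp; ring
  have hsplit : ∀ z : ℝ, 0 < z → z = z ^ ((1:ℝ)/n) * z ^ (((n:ℝ) - 1)/n) := by
    intro z hz
    rw [← Real.rpow_add hz, hexp, Real.rpow_one]
  have hkey : ∀ p : X, (μ (E ∩ ball p 1)).toReal ≤
      t ^ ((1:ℝ)/n) * (c * (μH[(n : ℝ) - 1] (essBoundary μ E ∩ ball p 1)).toReal) := by
    intro p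
    rcases eq_or_lt_of_le (ENNReal.toReal_nonneg :
        (0:ℝ) ≤ (μ (E ∩ ball p 1)).toReal) with h0 | h0
    · rw [← h0]
      have := ENNReal.toReal_nonneg (a := μH[(n : ℝ) - 1] (essBoundary μ E ∩ ball p 1))
      positivity
    · rw [hsplit _ h0]
      refine mul_le_mul ?_ (hiso' p) (by positivity) (by positivity)
      exact Real.rpow_le_rpow h0.le (hcon p).le (by positivity)
  have hkeystrict : ∀ p : X, 0 < (μ (E ∩ ball p 1)).toReal →
      (μ (E ∩ ball p 1)).toReal <
      t ^ ((1:ℝ)/n) * (c * (μH[(n : ℝ) - 1] (essBoundary μ E ∩ ball p 1)).toReal) := by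
    intro p h0
    have hHb : 0 < c * (μH[(n : ℝ) - 1] (essBoundary μ E ∩ ball p 1)).toReal := by
      have := hiso' p
      have hrp : 0 < (μ (E ∩ ball p 1)).toReal ^ (((n:ℝ) - 1)/n) := by
        apply Real.rpow_pos_of_pos h0
      linarith
    calc (μ (E ∩ ball p 1)).toReal
        = (μ (E ∩ ball p 1)).toReal ^ ((1:ℝ)/n) *
            (μ (E ∩ ball p 1)).toReal ^ (((n:ℝ) - 1)/n) := hsplit _ h0
      _ ≤ (μ (E ∩ ball p 1)).toReal ^ ((1:ℝ)/n) *
            (c * (μH[(n : ℝ) - 1] (essBoundary μ E ∩ ball p 1)).toReal) :=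
          mul_le_mul_of_nonneg_left (hiso' p) (by positivity)
      _ < t ^ ((1:ℝ)/n) *
            (c * (μH[(n : ℝ) - 1] (essBoundary μ E ∩ ball p 1)).toReal) := by
          refine mul_lt_mul_of_pos_right ?_ hHb
          exact Real.rpow_lt_rpow h0.le (hcon p) (by positivity)
  -- the net
  obtain ⟨S, hSE, hSsep, hScov⟩ := exists_net hEbd
  -- multiplicity bound
  have hmult : ∀ x : X, ((S.filter (fun p => x ∈ ball p 1)).card : ℝ) ≤ v6 / v2 := by
    intro x
    set I := S.filter (fun p => x ∈ ball p 1) with hI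
    have hm32fin := hfin x (3/2) (by norm_num)
    have hm32 : 0 < (μ (ball x (3/2))).toReal :=
      ENNReal.toReal_pos (hpos x (3/2) (by norm_num)).ne' hm32fin
    have hdisj : (↑I : Set X).PairwiseDisjoint (fun p => ball p (1/2)) := by
      intro p hp q hq hpq
      have hp' : p ∈ S := Finset.mem_of_mem_filter p (Finset.mem_coe.1 hp)
      have hq' : q ∈ S := Finset.mem_of_mem_filter q (Finset.mem_coe.1 hq)
      have := hSsep hp' hq' hpq
      exact ball_disjoint_ball (by linarith)
    have hsub : ∀ p ∈ I, ball p (1/2) ⊆ ball x (3/2) := by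
      intro p hp z hz
      have hxp : dist x p < 1 := by
        have := (Finset.mem_filter.1 hp).2
        rwa [mem_ball] at this
      rw [mem_ball] at hz ⊢
      calc dist z x ≤ dist z p + dist p x := dist_triangle _ _ _
        _ < 1/2 + 1 := by rw [dist_comm p x]; linarith
        _ = 3/2 := by norm_num
    have hsum : ∑ p ∈ I, μ (ball p (1/2)) ≤ μ (ball x (3/2)) := by
      rw [← measure_biUnion_finset hdisj (fun b _ => measurableSet_ball)]
      exact measure_mono (Set.iUnion₂_subset hsub)
    have hlow : ∀ p ∈ I, v2 / v6 * (μ (ball x (3/2))).toReal ≤ (μ (ball p (1/2))).toReal := by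
      intro p hp
      have hbg := hBG p (1/2) 6 (by norm_num) (by norm_num)
      have hxp : dist x p < 1 := by
        have := (Finset.mem_filter.1 hp).2
        rwa [mem_ball] at this
      have hsub6 : ball x (3/2) ⊆ ball p 6 := by
        intro z hz
        rw [mem_ball] at hz ⊢
        calc dist z p ≤ dist z x + dist x p := dist_triangle _ _ _
          _ < 3/2 + 1 := by linarith
          _ ≤ 6 := by norm_num
      have hle : (μ (ball x (3/2))).toReal ≤ (μ (ball p 6)).toReal :=
        ENNReal.toReal_mono (hfin p 6 (by norm_num)) (measure_mono hsub6)
      rw [div_mul_eq_mul_div, div_le_iff₀ hv6pos]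
      have hb2 : (0:ℝ) ≤ (μ (ball p (1/2))).toReal := ENNReal.toReal_nonneg
      nlinarith [hbg, hle, hv2pos, hv6pos]
    have hcard : (I.card : ℝ) * (v2 / v6 * (μ (ball x (3/2))).toReal) ≤
        (μ (ball x (3/2))).toReal := by
      calc (I.card : ℝ) * (v2 / v6 * (μ (ball x (3/2))).toReal)
          = ∑ _p ∈ I, v2 / v6 * (μ (ball x (3/2))).toReal := by
            rw [Finset.sum_const, nsmul_eq_mul]
        _ ≤ ∑ p ∈ I, (μ (ball p (1/2))).toReal := Finset.sum_le_sum hlow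
        _ = (∑ p ∈ I, μ (ball p (1/2))).toReal :=
            (ENNReal.toReal_sum (fun p _ => hfin p (1/2) (by norm_num))).symm
        _ ≤ (μ (ball x (3/2))).toReal := ENNReal.toReal_mono hm32fin hsum
    rw [le_div_iff₀ hv2pos]
    have h1 : (I.card : ℝ) * (v2 / v6) ≤ 1 := by
      have := hcard
      rw [← mul_assoc] at this
      exact le_of_mul_le_mul_right (by linarith) hm32
    calc (I.card : ℝ) * v2 = ((I.card : ℝ) * (v2 / v6)) * v6 := by rw [mul_assoc, div_mul_cancel₀ _ hv6pos.ne']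
      _ ≤ 1 * v6 := mul_le_mul_of_nonneg_right h1 hv6pos.le
      _ = v6 := one_mul _
  -- sum of boundary measures
  have hHsum : ∑ p ∈ S, (μH[(n : ℝ) - 1] (essBoundary μ E ∩ ball p 1)).toReal ≤
      (v6 / v2) * P := by
    set ν := (μH[(n : ℝ) - 1]).restrict (essBoundary μ E) with hνdef
    have hν : ∀ p : X, ν (ball p 1) = μH[(n : ℝ) - 1] (essBoundary μ E ∩ ball p 1) := by
      intro p
      rw [hνdef, Measure.restrict_apply measurableSet_ball, Set.inter_comm]
    have hνfin : ∀ p : X, ν (ball p 1) ≠ ⊤ := fun p =>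
      ne_top_of_le_ne_top hPfin (by rw [hν]; exact measure_mono Set.inter_subset_left)
    have hνuniv : ν Set.univ = μH[(n : ℝ) - 1] (essBoundary μ E) := by
      rw [hνdef, Measure.restrict_apply MeasurableSet.univ, Set.univ_inter]
    have hsum : ∑ p ∈ S, ν (ball p 1) ≤
        ENNReal.ofReal (v6 / v2) * μH[(n : ℝ) - 1] (essBoundary μ E) := by
      have heq : ∑ p ∈ S, ν (ball p 1) =
          ∫⁻ x, (∑ p ∈ S, (ball p 1).indicator (fun _ => (1:ℝ≥0∞)) x) ∂ν := by
        rw [lintegral_finset_sum _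
          (fun p _ => measurable_const.indicator measurableSet_ball)]
        congr 1
        ext p
        rw [lintegral_indicator measurableSet_ball]
        simp
      rw [heq]
      calc ∫⁻ x, (∑ p ∈ S, (ball p 1).indicator (fun _ => (1:ℝ≥0∞)) x) ∂ν
          ≤ ∫⁻ _x, ENNReal.ofReal (v6 / v2) ∂ν := by
            refine lintegral_mono fun x => ?_
            have hptw : ∑ p ∈ S, (ball p 1).indicator (fun _ => (1:ℝ≥0∞)) x =
                ((S.filter (fun p => x ∈ ball p 1)).card : ℝ≥0∞) := by
              simp only [Set.indicator_apply]
              rw [Finset.sum_boole]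
            rw [hptw, ← ENNReal.ofReal_natCast]
            exact ENNReal.ofReal_le_ofReal (hmult x)
        _ = ENNReal.ofReal (v6 / v2) * ν Set.univ := by
            rw [lintegral_const]
        _ = ENNReal.ofReal (v6 / v2) * μH[(n : ℝ) - 1] (essBoundary μ E) := by rw [hνuniv]
    have := ENNReal.toReal_mono (by
        refine ENNReal.mul_ne_top ENNReal.ofReal_ne_top hPfin) hsum
    rw [ENNReal.toReal_sum (fun p _ => hνfin p)] at this
    rw [ENNReal.toReal_mul, ENNReal.toReal_ofReal (by positivity)] at this
    simp only [hν] at this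
    exact this.trans_eq rfl
  -- covering bound
  have hcover : (μ E).toReal ≤ ∑ p ∈ S, (μ (E ∩ ball p 1)).toReal := by
    have h1 : μ E ≤ ∑ p ∈ S, μ (E ∩ ball p 1) := by
      calc μ E ≤ μ (⋃ p ∈ S, (E ∩ ball p 1)) := by
            refine measure_mono fun x hx => ?_
            obtain ⟨p, hpS, hxp⟩ := Set.mem_iUnion₂.1 (hScov hx)
            exact Set.mem_iUnion₂.2 ⟨p, hpS, hx, hxp⟩
        _ ≤ ∑ p ∈ S, μ (E ∩ ball p 1) := measure_biUnion_finset_le _ _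
    have h2 : (∑ p ∈ S, μ (E ∩ ball p 1)) ≠ ⊤ := by
      refine (ENNReal.sum_lt_top.2 fun p _ => ?_).ne
      exact lt_of_le_of_lt (measure_mono Set.inter_subset_right)
        (lt_top_iff_ne_top.2 (hfin p 1 one_pos))
    have := ENNReal.toReal_mono h2 h1
    rwa [ENNReal.toReal_sum (fun p _ => by
      exact ne_top_of_le_ne_top (hfin p 1 one_pos) (measure_mono Set.inter_subset_right))] at this
  -- some ball carries positive mass
  have hex : ∃ p ∈ S, 0 < (μ (E ∩ ball p 1)).toReal := by
    by_contra hno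
    push_neg at hno
    have : ∑ p ∈ S, (μ (E ∩ ball p 1)).toReal ≤ 0 :=
      Finset.sum_nonpos fun p hp => hno p hp
    linarith
  obtain ⟨p₁, hp₁S, hp₁⟩ := hex
  -- strict summation
  have hstrict : ∑ p ∈ S, (μ (E ∩ ball p 1)).toReal <
      ∑ p ∈ S, t ^ ((1:ℝ)/n) *
        (c * (μH[(n : ℝ) - 1] (essBoundary μ E ∩ ball p 1)).toReal) :=
    Finset.sum_lt_sum (fun p _ => hkey p) ⟨p₁, hp₁S, hkeystrict p₁ hp₁⟩
  -- finish
  have hfinal : (μ E).toReal < (μ E).toReal := by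
    calc (μ E).toReal ≤ ∑ p ∈ S, (μ (E ∩ ball p 1)).toReal := hcover
      _ < ∑ p ∈ S, t ^ ((1:ℝ)/n) *
            (c * (μH[(n : ℝ) - 1] (essBoundary μ E ∩ ball p 1)).toReal) := hstrict
      _ = t ^ ((1:ℝ)/n) * c *
            ∑ p ∈ S, (μH[(n : ℝ) - 1] (essBoundary μ E ∩ ball p 1)).toReal := by
          rw [Finset.mul_sum]
          exact Finset.sum_congr rfl fun p _ => by ring
      _ ≤ t ^ ((1:ℝ)/n) * c * ((v6 / v2) * P) := by
          refine mul_le_mul_of_nonneg_left hHsum ?_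
          have : (0:ℝ) ≤ t ^ ((1:ℝ)/n) := by positivity
          positivity
      _ ≤ y * c * ((v6 / v2) * P) := by
          refine mul_le_mul_of_nonneg_right (mul_le_mul_of_nonneg_right htpow hc.le) ?_
          positivity
      _ = (μ E).toReal := by
          rw [hydef]
          field_simp
  exact absurd hfinal (lt_irrefl _)
end

section
/- Let n ≥ 2 be an integer, c > 0 and r₀ ∈ ℝ. Let V : [r₀, ∞) → [0, ∞) be a nonincreasing function such that for Lebesgue-almost every r > r₀ the function V is differentiable at r and satisfies V′(r) ≤ −c·V(r)^{(n−1)/n}. Then V(r) = 0 for every r ≥ r₀ + (n/c)·V(r₀)^{1/n}; in particular there exists a finite r̄ such that V vanishes identically on [r̄, ∞). -/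
open MeasureTheory Set Filter

/-- ODE comparison: a nonincreasing nonnegative function satisfying
`V' ≤ -c V^{(n-1)/n}` almost everywhere vanishes in finite time. -/
theorem ode_extinction (n : ℕ) (hn : 2 ≤ n) (c r₀ : ℝ) (hc : 0 < c)
    (V : ℝ → ℝ)
    (hnonneg : ∀ r, r₀ ≤ r → 0 ≤ V r)
    (hmono : AntitoneOn V (Set.Ici r₀))
    (hdiff : ∀ᵐ r : ℝ, r₀ < r → DifferentiableAt ℝ V r ∧
      deriv V r ≤ -c * V r ^ (((n : ℝ) - 1) / n)) :
    (∀ r : ℝ, r₀ + (n / c) * V r₀ ^ ((1 : ℝ) / n) ≤ r → V r = 0) ∧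
    ∃ rbar : ℝ, ∀ r : ℝ, rbar ≤ r → V r = 0 := by
  have hn0 : (0:ℝ) < (n:ℝ) := by
    have : (2:ℝ) ≤ (n:ℝ) := by exact_mod_cast hn
    linarith
  have main : ∀ r : ℝ, r₀ + (n / c) * V r₀ ^ ((1 : ℝ) / n) ≤ r → V r = 0 := by
    intro r hr
    have hW0 : (0:ℝ) ≤ V r₀ ^ ((1:ℝ)/n) := Real.rpow_nonneg (hnonneg r₀ le_rfl) _
    have hrr0 : r₀ ≤ r := by
      have h1 : 0 ≤ (n / c) * V r₀ ^ ((1:ℝ)/n) :=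
        mul_nonneg (div_nonneg hn0.le hc.le) hW0
      linarith
    by_contra hVr
    have hVrpos : 0 < V r := lt_of_le_of_ne (hnonneg r hrr0) (Ne.symm hVr)
    have hV0pos : 0 < V r₀ := lt_of_lt_of_le hVrpos (hmono (mem_Ici.2 le_rfl) (mem_Ici.2 hrr0) hrr0)
    have hW0pos : 0 < V r₀ ^ ((1:ℝ)/n) := Real.rpow_pos_of_pos hV0pos _
    have hr₀r : r₀ < r := by
      have h1 : 0 < (n / c) * V r₀ ^ ((1:ℝ)/n) :=
        mul_pos (div_pos hn0 hc) hW0pos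
      linarith
    have hVpos : ∀ s ∈ Icc r₀ r, 0 < V s := fun s hs =>
      lt_of_lt_of_le hVrpos (hmono (mem_Ici.2 hs.1) (mem_Ici.2 hrr0) hs.2)
    -- the clamped monotone function g
    set g : ℝ → ℝ := fun x => -(V (min (max x r₀) r) ^ ((1:ℝ)/n)) with hgdef
    have hclamp : ∀ x : ℝ, min (max x r₀) r ∈ Icc r₀ r := by
      intro x
      exact ⟨le_min (le_max_right _ _) hrr0, min_le_right _ _⟩
    have hg : Monotone g := by
      intro x y hxy
      have hxc := hclamp x
      have hyc := hclamp y
      have hle : min (max x r₀) r ≤ min (max y r₀) r :=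
        min_le_min (max_le_max hxy le_rfl) le_rfl
      have hVle : V (min (max y r₀) r) ≤ V (min (max x r₀) r) :=
        hmono (mem_Ici.2 hxc.1) (mem_Ici.2 hyc.1) hle
      simp only [hgdef, neg_le_neg_iff]
      exact Real.rpow_le_rpow (hnonneg _ hyc.1) hVle (by positivity)
    set F := hg.stieltjesFunction with hF
    set μ := F.measure with hμ
    -- a.e. lower bound on the RN derivative
    have key : ∀ᵐ x : ℝ, x ∈ Ioo r₀ r → ENNReal.ofReal (c/n) ≤ μ.rnDeriv volume x := by
      filter_upwards [hdiff, hg.ae_hasDerivAt] with x hx hderiv hmem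
      obtain ⟨hx1, hx2⟩ := hmem
      obtain ⟨hVdiff, hVle⟩ := hx hx1
      have hVx : 0 < V x := hVpos x ⟨hx1.le, hx2.le⟩
      have heq : (fun y => -(V y ^ ((1:ℝ)/n))) =ᶠ[nhds x] g := by
        filter_upwards [Ioo_mem_nhds hx1 hx2] with y hy
        simp only [hgdef, max_eq_left hy.1.le, min_eq_left hy.2.le]
      have hD : HasDerivAt (fun y => -(V y ^ ((1:ℝ)/n)))
          (-(deriv V x * ((1:ℝ)/n) * V x ^ ((1:ℝ)/n - 1))) x :=
        (hVdiff.hasDerivAt.rpow_const (Or.inl hVx.ne')).neg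
      have hD' : HasDerivAt g (-(deriv V x * ((1:ℝ)/n) * V x ^ ((1:ℝ)/n - 1))) x :=
        hD.congr_of_eventuallyEq heq.symm
      have huniq : (μ.rnDeriv volume x).toReal
          = -(deriv V x * ((1:ℝ)/n) * V x ^ ((1:ℝ)/n - 1)) :=
        hderiv.unique hD'
      have hcn : c/n ≤ -(deriv V x * ((1:ℝ)/n) * V x ^ ((1:ℝ)/n - 1)) := by
        have h1 : c * V x ^ (((n:ℝ)-1)/n) ≤ -deriv V x := by linarith
        have hpos : (0:ℝ) ≤ ((1:ℝ)/n) * V x ^ ((1:ℝ)/n - 1) := by positivity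
        have h2 : (c * V x ^ (((n:ℝ)-1)/n)) * (((1:ℝ)/n) * V x ^ ((1:ℝ)/n - 1))
            ≤ (-deriv V x) * (((1:ℝ)/n) * V x ^ ((1:ℝ)/n - 1)) :=
          mul_le_mul_of_nonneg_right h1 hpos
        have h3 : V x ^ (((n:ℝ)-1)/n) * V x ^ ((1:ℝ)/n - 1) = 1 := by
          rw [← Real.rpow_add hVx]
          have : ((n:ℝ)-1)/n + ((1:ℝ)/n - 1) = 0 := by field_simp; ring
          rw [this, Real.rpow_zero]
        calc c/n = (c * V x ^ (((n:ℝ)-1)/n)) * (((1:ℝ)/n) * V x ^ ((1:ℝ)/n - 1)) := by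
              rw [show (c * V x ^ (((n:ℝ)-1)/n)) * (((1:ℝ)/n) * V x ^ ((1:ℝ)/n - 1))
                  = c * ((1:ℝ)/n) * (V x ^ (((n:ℝ)-1)/n) * V x ^ ((1:ℝ)/n - 1)) by ring, h3]
              ring
          _ ≤ (-deriv V x) * (((1:ℝ)/n) * V x ^ ((1:ℝ)/n - 1)) := h2
          _ = -(deriv V x * ((1:ℝ)/n) * V x ^ ((1:ℝ)/n - 1)) := by ring
      exact ENNReal.ofReal_le_of_le_toReal (by rw [huniq]; exact hcn)
    -- values of g at the endpoints
    have hgr : g r = -(V r ^ ((1:ℝ)/n)) := by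
      simp only [hgdef, max_eq_left hrr0, min_self]
    have hgr0 : g r₀ = -(V r₀ ^ ((1:ℝ)/n)) := by
      simp only [hgdef, max_self, min_eq_left hrr0]
    -- the measure estimate on subintervals
    have hb : ∀ b ∈ Ioo r₀ r, c/n * (b - r₀) ≤ V r₀ ^ ((1:ℝ)/n) - V r ^ ((1:ℝ)/n) := by
      intro b hbm
      have h1 : ENNReal.ofReal (c/n) * volume (Ioo r₀ b) ≤ μ (Ioo r₀ b) := by
        calc ENNReal.ofReal (c/n) * volume (Ioo r₀ b)
            = ∫⁻ _ in Ioo r₀ b, ENNReal.ofReal (c/n) := (setLIntegral_const _ _).symm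
          _ ≤ ∫⁻ x in Ioo r₀ b, μ.rnDeriv volume x := by
              refine lintegral_mono_ae ?_
              refine (ae_restrict_iff' measurableSet_Ioo).2 ?_
              filter_upwards [key] with x hx hmem
              exact hx ⟨hmem.1, hmem.2.trans hbm.2⟩
          _ ≤ μ (Ioo r₀ b) := Measure.setLIntegral_rnDeriv_le _
      have h2 : μ (Ioo r₀ b) ≤ ENNReal.ofReal (g r - g r₀) := by
        refine (measure_mono Ioo_subset_Ioc_self).trans ?_
        rw [hμ, F.measure_Ioc]
        apply ENNReal.ofReal_le_ofReal
        have e1 : F b ≤ g r := by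
          rw [hF, hg.stieltjesFunction_eq]; exact hg.rightLim_le hbm.2
        have e2 : g r₀ ≤ F r₀ := by
          rw [hF, hg.stieltjesFunction_eq]; exact hg.le_rightLim le_rfl
        linarith
      rw [Real.volume_Ioo, ← ENNReal.ofReal_mul (by positivity)] at h1
      have h3 := h1.trans h2
      have hgmono : g r₀ ≤ g r := hg hrr0
      have h4 : c/n * (b - r₀) ≤ g r - g r₀ :=
        (ENNReal.ofReal_le_ofReal_iff (by linarith)).1 h3
      rw [hgr, hgr0] at h4
      linarith
    -- pass to the limit b → r
    set W₀ := V r₀ ^ ((1:ℝ)/n) with hW₀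
    set Wr := V r ^ ((1:ℝ)/n) with hWr
    have hWrpos : 0 < Wr := Real.rpow_pos_of_pos hVrpos _
    have hfin : c/n * (r - r₀) ≤ W₀ - Wr := by
      by_contra hcon
      push_neg at hcon
      have hD0 : 0 ≤ W₀ - Wr := by
        have : Wr ≤ W₀ :=
          Real.rpow_le_rpow (hnonneg r hrr0)
            (hmono (mem_Ici.2 le_rfl) (mem_Ici.2 hrr0) hrr0) (by positivity)
        linarith
      set k := c/n with hk
      have hkpos : 0 < k := by positivity
      set D := W₀ - Wr with hD
      set b := r₀ + (r - r₀ + D/k)/2 with hbdef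
      have hDk : k * (D/k) = D := mul_div_cancel₀ D hkpos.ne'
      have hDk2 : D/k < r - r₀ := (div_lt_iff₀' hkpos).2 (by linarith)
      have hDk3 : 0 ≤ D/k := div_nonneg hD0 hkpos.le
      have hb1 : r₀ < b := by rw [hbdef]; linarith
      have hb2 : b < r := by rw [hbdef]; linarith
      have := hb b ⟨hb1, hb2⟩
      have hkb : k * (b - r₀) = (k*(r - r₀) + D)/2 := by
        rw [hbdef]; field_simp; linarith [hDk]
      rw [hkb] at this
      linarith
    -- contradiction
    have hfinal : W₀ ≤ c/n * (r - r₀) := by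
      have h1 : (n / c) * W₀ ≤ r - r₀ := by linarith
      have h2 : c/n * ((n / c) * W₀) ≤ c/n * (r - r₀) :=
        mul_le_mul_of_nonneg_left h1 (by positivity)
      have h3 : c/n * ((n / c) * W₀) = W₀ := by field_simp
      linarith
    linarith
  exact ⟨main, ⟨r₀ + (n / c) * V r₀ ^ ((1 : ℝ) / n), fun r hr => main r hr⟩⟩
end
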